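/- Every finite simple 2-degenerate graph is near-bipartite: its vertex set can be partitioned into an independent set I and a set F inducing a forest. -/

import Mathlib

def Degenerate {V : Type*} [DecidableEq V] (k : ℕ) (G : SimpleGraph V)
    [DecidableRel G.Adj] : Prop :=
  ∀ s : Finset V, s.Nonempty → ∃ v ∈ s, (s.filter fun u => G.Adj v u).card ≤ k

def NearBipartite {V : Type*} (G : SimpleGraph V) : Prop :=
  ∃ I : Set V, (∀ ⦃u v : V⦄, u ∈ I → v ∈ I → ¬ G.Adj u v) ∧ (G.induce Iᶜ).IsAcyclic

open SimpleGraph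

/-- A cycle through `v` gives two distinct neighbors of `v` on the cycle. -/
lemma cycle_two_nbrs {V : Type*} {G : SimpleGraph V} {v : V} (d : G.Walk v v)
    (hd : d.IsCycle) : ∃ a b, a ≠ b ∧ G.Adj v a ∧ G.Adj v b ∧
      a ∈ d.support ∧ b ∈ d.support := by
  cases d with
  | nil => exact absurd hd Walk.IsCycle.not_of_nil
  | @cons _ a _ h p =>
    have hd' := (Walk.cons_isCycle_iff _ _).mp hd
    obtain ⟨b, h2, q, hq⟩ := Walk.exists_eq_cons_of_ne h.ne p.reverse
    have hbp : b ∈ p.support := by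
      have : b ∈ p.reverse.support := by
        rw [hq]; simp [Walk.start_mem_support]
      rwa [Walk.support_reverse, List.mem_reverse] at this
    refine ⟨a, b, ?_, h, h2, ?_, ?_⟩
    · rintro rfl
      have hrev : p.reverse.IsPath := hd'.1.reverse
      rw [hq, Walk.cons_isPath_iff] at hrev
      have hqnil : q = Walk.nil := Walk.isPath_iff_eq_nil.mp hrev.1
      have hlen : p.length = 1 := by
        have : p.reverse.length = 1 := by rw [hq, hqnil]; simp
        rwa [Walk.length_reverse] at this
      have := hd.three_le_length
      rw [Walk.length_cons, hlen] at this
      omega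
    · simp [Walk.start_mem_support]
    · simp [hbp]

/-- Induction step: every finset can be partitioned into an independent set and a
set containing no cycle support. -/
lemma aux_partition {V : Type*} [Fintype V] [DecidableEq V]
    (G : SimpleGraph V) [DecidableRel G.Adj]
    (h : ∀ s : Finset V, s.Nonempty → ∃ v ∈ s, (s.filter fun u => G.Adj v u).card ≤ 2)
    (s : Finset V) :
    ∃ I F : Finset V, I ∪ F = s ∧ Disjoint I F ∧
      (∀ u ∈ I, ∀ w ∈ I, ¬ G.Adj u w) ∧
      (∀ (x : V) (c : G.Walk x x), c.IsCycle → ∃ y ∈ c.support, y ∉ F) := by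
  induction s using Finset.strongInduction with
  | _ s IH =>
    rcases s.eq_empty_or_nonempty with rfl | hne
    · exact ⟨∅, ∅, by simp, by simp, by simp, fun x c hc =>
        ⟨x, c.start_mem_support, by simp⟩⟩
    obtain ⟨v, hvs, hv2⟩ := h s hne
    have hss : s.erase v ⊂ s := Finset.erase_ssubset hvs
    obtain ⟨I, F, hIF, hdisj, hind, hcyc⟩ := IH _ hss
    have hIsub : I ⊆ s.erase v := hIF ▸ Finset.subset_union_left
    have hFsub : F ⊆ s.erase v := hIF ▸ Finset.subset_union_right
    have hvI : v ∉ I := fun hv => (Finset.mem_erase.mp (hIsub hv)).1 rfl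
    have hvF : v ∉ F := fun hv => (Finset.mem_erase.mp (hFsub hv)).1 rfl
    by_cases hA : ∃ w ∈ I, G.Adj v w
    · obtain ⟨w, hwI, hvw⟩ := hA
      refine ⟨I, insert v F, ?_, ?_, hind, ?_⟩
      · rw [Finset.union_insert, hIF, Finset.insert_erase hvs]
      · rw [Finset.disjoint_insert_right]
        exact ⟨hvI, hdisj⟩
      · intro x c hc
        by_contra hcon
        push_neg at hcon
        by_cases hvc : v ∈ c.support
        · set d := c.rotate v hvc with hd
          have hdc : d.IsCycle := hc.rotate hvc
          have hdsupp : ∀ y ∈ d.support, y ∈ insert v F := by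
            intro y hy
            rw [d.support_eq_cons] at hy
            rcases List.mem_cons.mp hy with rfl | hy
            · exact Finset.mem_insert_self _ _
            · have : y ∈ c.support.tail := (Walk.support_rotate c v hvc).mem_iff.mp hy
              exact hcon y (List.mem_of_mem_tail this)
          obtain ⟨a, b, hab, hva, hvb, has, hbs⟩ := cycle_two_nbrs d hdc
          have haF : a ∈ F := by
            rcases Finset.mem_insert.mp (hdsupp a has) with rfl | ha
            · exact absurd rfl hva.ne
            · exact ha
          have hbF : b ∈ F := by
            rcases Finset.mem_insert.mp (hdsupp b hbs) with rfl | hb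
            · exact absurd rfl hvb.ne
            · exact hb
          have hwa : w ≠ a := fun he => (Finset.disjoint_left.mp hdisj hwI) (he ▸ haF)
          have hwb : w ≠ b := fun he => (Finset.disjoint_left.mp hdisj hwI) (he ▸ hbF)
          have hsub : ({w, a, b} : Finset V) ⊆ s.filter fun u => G.Adj v u := by
            intro y hy
            simp only [Finset.mem_insert, Finset.mem_singleton] at hy
            rcases hy with rfl | rfl | rfl
            · exact Finset.mem_filter.mpr ⟨(Finset.erase_subset _ _) (hIsub hwI), hvw⟩
            · exact Finset.mem_filter.mpr ⟨(Finset.erase_subset _ _) (hFsub haF), hva⟩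
            · exact Finset.mem_filter.mpr ⟨(Finset.erase_subset _ _) (hFsub hbF), hvb⟩
          have hcard : ({w, a, b} : Finset V).card = 3 := by
            rw [Finset.card_insert_of_notMem (by simp [hwa, hwb]),
              Finset.card_insert_of_notMem (by simp [hab]), Finset.card_singleton]
          have := Finset.card_le_card hsub
          omega
        · obtain ⟨y, hy, hyF⟩ := hcyc x c hc
          rcases Finset.mem_insert.mp (hcon y hy) with rfl | hyF'
          · exact hvc hy
          · exact hyF hyF'
    · push_neg at hA
      refine ⟨insert v I, F, ?_, ?_, ?_, hcyc⟩
      · rw [Finset.insert_union, hIF, Finset.insert_erase hvs]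
      · rw [Finset.disjoint_insert_left]
        exact ⟨hvF, hdisj⟩
      · intro u hu w hw hadj
        rcases Finset.mem_insert.mp hu with h1 | h1
        · rcases Finset.mem_insert.mp hw with h2 | h2
          · rw [h1, h2] at hadj; exact G.irrefl hadj
          · rw [h1] at hadj; exact hA w h2 hadj
        · rcases Finset.mem_insert.mp hw with h2 | h2
          · rw [h2] at hadj; exact hA u h1 hadj.symm
          · exact hind u h1 w h2 hadj

/-- Every finite simple 2-degenerate graph is near-bipartite. -/
theorem two_degenerate_nearBipartite {V : Type*} [Fintype V] [DecidableEq V]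
    (G : SimpleGraph V) [DecidableRel G.Adj] (h : Degenerate 2 G) :
    NearBipartite G := by
  obtain ⟨I, F, hIF, hdisj, hind, hcyc⟩ := aux_partition G h Finset.univ
  refine ⟨(↑I : Set V), fun u w hu hw => hind u hu w hw, ?_⟩
  intro u c hc
  let emb : G.induce ((↑I : Set V)ᶜ) ↪g G := SimpleGraph.Embedding.induce (G := G) ((↑I : Set V)ᶜ)
  have hinj : Function.Injective emb.toHom := emb.injective
  have hc' : (c.map emb.toHom).IsCycle :=
    (Walk.map_isCycle_iff_of_injective hinj).mpr hc
  obtain ⟨y, hy, hyF⟩ := hcyc _ (c.map emb.toHom) hc'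
  rw [Walk.support_map, List.mem_map] at hy
  obtain ⟨z, hz, rfl⟩ := hy
  have hzc : (emb.toHom z : V) ∈ I ∪ F := hIF ▸ Finset.mem_univ _
  rcases Finset.mem_union.mp hzc with h' | h'
  · exact z.2 (by simpa [emb] using h')
  · exact hyF h'
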